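/- arXiv:1204.1958 — 7 statements merged into one kernel-verified Lean document; each statement's English description precedes it below -/
import Mathlib

section
/- Every permutation of a finite set can be written as the product of two involutions. -/
open Equiv Equiv.Perm

private lemma isCycle_zpow_eq_one {α : Type*} [Fintype α] {σ : Equiv.Perm α} (hσ : σ.IsCycle)
    {x : α} (hx : σ x ≠ x) {m : ℤ} (h : (σ ^ m) x = x) : σ ^ m = 1 := by
  rcases Int.natAbs_eq m with hm | hm
  · rw [hm, zpow_natCast] at h ⊢
    exact (hσ.pow_eq_one_iff' hx).2 h
  · rw [hm, zpow_neg, zpow_natCast] at h ⊢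
    rw [Equiv.Perm.inv_eq_iff_eq] at h
    rw [inv_eq_one]
    exact (hσ.pow_eq_one_iff' hx).2 h.symm

private lemma isCycle_neg_key {α : Type*} [Fintype α] [DecidableEq α] {σ : Equiv.Perm α} (hσ : σ.IsCycle)
    {x : α} (hx : σ x ≠ x) {a b : ℤ} (h : (σ ^ a) x = (σ ^ b) x) :
    (σ ^ (-a)) x = (σ ^ (-b)) x := by
  have hmem : σ ((σ ^ b) x) ≠ (σ ^ b) x :=
    Equiv.Perm.mem_support.1
      (Equiv.Perm.zpow_apply_mem_support.2 (Equiv.Perm.mem_support.2 hx))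
  have h1 : (σ ^ (a - b)) ((σ ^ b) x) = (σ ^ b) x := by
    rw [← Equiv.Perm.mul_apply, ← zpow_add, sub_add_cancel, h]
  have h2 : σ ^ (a - b) = 1 := isCycle_zpow_eq_one hσ hmem h1
  rw [show (-a : ℤ) = -(a - b) + -b by ring, zpow_add, zpow_neg, h2, inv_one, one_mul]

/-- A cycle is a product of two involutions (with controlled supports). -/
private lemma cycle_case {α : Type*} [Fintype α] [DecidableEq α] {σ : Equiv.Perm α}
    (hσ : σ.IsCycle) :
    ∃ τ : Equiv.Perm α, τ * τ = 1 ∧ (σ * τ) * (σ * τ) = 1 ∧ τ.support ⊆ σ.support := by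
  obtain ⟨x, hx, hall⟩ := hσ
  have hσ' : σ.IsCycle := ⟨x, hx, hall⟩
  set f : α → α := fun y => if h : σ.SameCycle x y then (σ ^ (-(h.choose))) x else y with hfdef
  have hf1 : ∀ k : ℤ, f ((σ ^ k) x) = (σ ^ (-k)) x := by
    intro k
    have h : σ.SameCycle x ((σ ^ k) x) := ⟨k, rfl⟩
    have : f ((σ ^ k) x) = (σ ^ (-(h.choose))) x := dif_pos h
    rw [this]
    exact isCycle_neg_key hσ' hx h.choose_spec
  have hf2 : ∀ y, ¬ σ.SameCycle x y → f y = y := fun y h => dif_neg h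
  have hns : ∀ y, y ∉ σ.support → ¬ σ.SameCycle x y := by
    intro y hy hc
    obtain ⟨k, hk⟩ := hc
    apply hy
    rw [← hk]
    exact Equiv.Perm.zpow_apply_mem_support.2 (Equiv.Perm.mem_support.2 hx)
  have hinv : Function.Involutive f := by
    intro y
    by_cases h : σ.SameCycle x y
    · obtain ⟨k, hk⟩ := h
      rw [← hk, hf1, hf1, neg_neg]
    · rw [hf2 y h, hf2 y h]
  refine ⟨hinv.toPerm f, ?_, ?_, ?_⟩
  · ext y
    simpa using hinv y
  · ext y
    simp only [Equiv.Perm.mul_apply, Equiv.Perm.one_apply, Function.Involutive.coe_toPerm]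
    by_cases h : σ.SameCycle x y
    · obtain ⟨k, hk⟩ := h
      subst hk
      rw [hf1]
      have e1 : σ ((σ ^ (-k)) x) = (σ ^ (1 - k)) x := by
        rw [show (1 - k : ℤ) = 1 + -k by ring, zpow_add, zpow_one, Equiv.Perm.mul_apply]
      rw [e1, hf1]
      rw [show σ ((σ ^ (-(1 - k))) x) = (σ ^ (1 + -(1 - k))) x by
        rw [zpow_add, zpow_one, Equiv.Perm.mul_apply]]
      norm_num
    · have hy : y ∉ σ.support := fun hmem => h (hall (Equiv.Perm.mem_support.1 hmem))
      have hfix : σ y = y := Equiv.Perm.notMem_support.1 hy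
      rw [hf2 y h, hfix, hf2 y h, hfix]
  · intro y hy
    by_contra hys
    exact (Equiv.Perm.mem_support.1 hy) (hf2 y (hns y hys))

/-- Every permutation of a finite set is a product of two involutions. -/
theorem perm_eq_prod_two_involutions {α : Type*} [Fintype α] (σ : Equiv.Perm α) :
    ∃ τ₁ τ₂ : Equiv.Perm α, τ₁ * τ₁ = 1 ∧ τ₂ * τ₂ = 1 ∧ σ = τ₁ * τ₂ := by
  classical
  suffices h : ∃ τ₁ τ₂ : Equiv.Perm α, τ₁ * τ₁ = 1 ∧ τ₂ * τ₂ = 1 ∧ σ = τ₁ * τ₂ ∧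
      τ₁.support ⊆ σ.support ∧ τ₂.support ⊆ σ.support by
    obtain ⟨τ₁, τ₂, h1, h2, h3, -, -⟩ := h
    exact ⟨τ₁, τ₂, h1, h2, h3⟩
  induction σ using Equiv.Perm.cycle_induction_on with
  | base_one => exact ⟨1, 1, one_mul 1, one_mul 1, (one_mul 1).symm, by simp, by simp⟩
  | base_cycles σ hσ =>
    obtain ⟨τ, h1, h2, h3⟩ := cycle_case hσ
    refine ⟨σ * τ, τ, h2, h1, by rw [mul_assoc, h1, mul_one], ?_, h3⟩
    exact (Equiv.Perm.support_mul_le σ τ).trans (by simp [h3])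
  | induction_disjoint σ π hd hc ih1 ih2 =>
    obtain ⟨a₁, a₂, ha1, ha2, ha3, ha4, ha5⟩ := ih1
    obtain ⟨b₁, b₂, hb1, hb2, hb3, hb4, hb5⟩ := ih2
    have hcomm : ∀ (u v : Equiv.Perm α), u.support ⊆ σ.support → v.support ⊆ π.support →
        Commute u v := by
      intro u v hu hv
      apply Equiv.Perm.Disjoint.commute
      rw [Equiv.Perm.disjoint_iff_disjoint_support]
      exact Finset.disjoint_of_subset_left hu
        (Finset.disjoint_of_subset_right hv (Equiv.Perm.disjoint_iff_disjoint_support.1 hd))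
    refine ⟨a₁ * b₁, a₂ * b₂, ?_, ?_, ?_, ?_, ?_⟩
    · calc a₁ * b₁ * (a₁ * b₁) = (a₁ * a₁) * (b₁ * b₁) := by
            rw [mul_assoc, ← mul_assoc b₁, ← (hcomm a₁ b₁ ha4 hb4).eq, mul_assoc, ← mul_assoc]
      _ = 1 := by rw [ha1, hb1, one_mul]
    · calc a₂ * b₂ * (a₂ * b₂) = (a₂ * a₂) * (b₂ * b₂) := by
            rw [mul_assoc, ← mul_assoc b₂, ← (hcomm a₂ b₂ ha5 hb5).eq, mul_assoc, ← mul_assoc]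
      _ = 1 := by rw [ha2, hb2, one_mul]
    · rw [ha3, hb3, mul_assoc, ← mul_assoc a₂, (hcomm a₂ b₁ ha5 hb4).eq,
        mul_assoc b₁, ← mul_assoc a₁]
    · rw [hd.support_mul]
      exact (Equiv.Perm.support_mul_le a₁ b₁).trans
        (sup_le (ha4.trans le_sup_left) (hb4.trans le_sup_right))
    · rw [hd.support_mul]
      exact (Equiv.Perm.support_mul_le a₂ b₂).trans
        (sup_le (ha5.trans le_sup_left) (hb5.trans le_sup_right))
end

section
/- For n > 2, the cyclic permutation C_n of {0,...,n-1} has exactly n factorizations as a product of two involutions; i.e., if C_n = S ∘ T with S, T involutions, then there exists k with 0 ≤ k < n such that S(x) = k - x (mod n) and T(x) = (k-1) - x (mod n). -/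
/-- For `n > 2`, every factorization of the cycle `C_n : x ↦ x + 1` on `ZMod n`
as a product `S * T` of two involutions has the form `S = I_k`, `T = I_{k-1}`
for some `k`, where `I_k x = k - x`. -/
theorem cycle_factorization_unique (n : ℕ) (hn : 2 < n) (S T : Equiv.Perm (ZMod n))
    (hS : S * S = 1) (hT : T * T = 1)
    (h : S * T = Equiv.addRight (1 : ZMod n)) :
    ∃ k : ZMod n, (∀ x, S x = k - x) ∧ (∀ x, T x = (k - 1) - x) := by
  haveI : NeZero n := ⟨by omega⟩
  have hS' : ∀ x, S (S x) = x := fun x => by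
    have := congrArg (fun p => p x) hS; simpa [Equiv.Perm.mul_apply] using this
  have hT' : ∀ x, T (T x) = x := fun x => by
    have := congrArg (fun p => p x) hT; simpa [Equiv.Perm.mul_apply] using this
  have hST : ∀ x, S (T x) = x + 1 := fun x => by
    have := congrArg (fun p => p x) h; simpa [Equiv.Perm.mul_apply] using this
  -- T x = S (x + 1)
  have hTS : ∀ x, T x = S (x + 1) := fun x => by
    have := congrArg S (hST x); rw [hS'] at this; rw [this]
  -- S (z + 1) = S z - 1
  have key : ∀ z, S (z + 1) = S z - 1 := fun z => by
    have h1 := hT' z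
    rw [hTS, hTS] at h1
    -- T (S (z+1)) = S (S (z+1) + 1). So S (S (z+1) + 1) = z.
    have h2 := congrArg S h1
    rw [hS'] at h2
    -- h2 : S (z + 1) + 1 = S z
    linear_combination h2
  -- induction: S m = S 0 - m
  have hnat : ∀ m : ℕ, S (m : ZMod n) = S 0 - m := by
    intro m
    induction m with
    | zero => simp
    | succ m ih => push_cast; rw [key, ih]; ring
  refine ⟨S 0, fun x => ?_, fun x => ?_⟩
  · have := hnat x.val
    rwa [ZMod.natCast_val, ZMod.cast_id] at this
  · rw [hTS]
    have := hnat (x + 1).val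
    rw [ZMod.natCast_val, ZMod.cast_id] at this
    rw [this]; ring
end

section
/- For k ≥ 2, n ≥ 1, and every i with 0 ≤ i < k^n − 1, the composition rev_n(rev_{n-1}(i)) equals k·i mod (k^n − 1). Moreover if i has leading base-k digit j (i.e., j = ⌊i/k^{n-1}⌋), then rev_n(rev_{n-1}(i)) = k·i − j·(k^n − 1). -/
/-- `revP k p i` reverses the `p` least significant base-`k` digits of `i`. -/
def revP (k p i : ℕ) : ℕ :=
  (i / k ^ p) * k ^ p + ∑ j ∈ Finset.range p, (i / k ^ j % k) * k ^ (p - 1 - j)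

/-- The digit-reversal sum. -/
def Srev (k p x : ℕ) : ℕ := ∑ j ∈ Finset.range p, (x / k ^ j % k) * k ^ (p - 1 - j)

lemma revP_eq (k p i : ℕ) : revP k p i = (i / k ^ p) * k ^ p + Srev k p i := rfl

lemma Srev_mod (k p x : ℕ) : Srev k p (x % k ^ p) = Srev k p x := by
  unfold Srev
  refine Finset.sum_congr rfl (fun t ht => ?_)
  have ht' : t + 1 ≤ p := Finset.mem_range.mp ht
  have h1 : (x % k ^ p) / k ^ t % k = (x % k ^ p) % (k ^ t * k) / k ^ t :=
    (Nat.mod_mul_right_div_self _ _ _).symm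
  have h2 : x / k ^ t % k = x % (k ^ t * k) / k ^ t := (Nat.mod_mul_right_div_self _ _ _).symm
  have hdvd : k ^ t * k ∣ k ^ p := by
    rw [← pow_succ]; exact pow_dvd_pow k ht'
  rw [h1, h2, Nat.mod_mod_of_dvd _ hdvd]

lemma Srev_rec2 (k p x : ℕ) : Srev k (p + 1) x = k * Srev k p x + x / k ^ p % k := by
  unfold Srev
  rw [Finset.sum_range_succ]
  have h0 : p + 1 - 1 - p = 0 := by omega
  rw [h0, pow_zero, mul_one, Finset.mul_sum]
  congr 1
  refine Finset.sum_congr rfl (fun t ht => ?_)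
  have ht' : t < p := Finset.mem_range.mp ht
  have h1 : p + 1 - 1 - t = (p - 1 - t) + 1 := by omega
  rw [h1, pow_succ]
  ring

lemma Srev_rec1 (k p x : ℕ) : Srev k (p + 1) x = Srev k p (x / k) + (x % k) * k ^ p := by
  unfold Srev
  rw [Finset.sum_range_succ']
  congr 1
  · refine Finset.sum_congr rfl (fun t ht => ?_)
    have h1 : p + 1 - 1 - (t + 1) = p - 1 - t := by omega
    rw [h1, pow_succ, mul_comm (k ^ t) k, ← Nat.div_div_eq_div_mul]
  · simp

lemma Srev_lt (k p : ℕ) (hk : 1 ≤ k) (x : ℕ) : Srev k p x < k ^ p := by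
  induction p generalizing x with
  | zero => simp [Srev]
  | succ p ih =>
    rw [Srev_rec2]
    have h1 := ih x
    have h2 : x / k ^ p % k < k := Nat.mod_lt _ (by omega)
    have h3 : k * Srev k p x ≤ k * (k ^ p - 1) :=
      Nat.mul_le_mul_left k (Nat.le_sub_one_of_lt h1)
    have hkp : 1 ≤ k ^ p := Nat.one_le_pow _ _ (by omega)
    have h4 : k * (k ^ p - 1) + k = k * k ^ p := by
      rw [Nat.mul_sub_one]
      have : k ≤ k * k ^ p := Nat.le_mul_of_pos_right k hkp
      omega
    rw [pow_succ, mul_comm (k ^ p) k]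
    omega

lemma Srev_invol (k p : ℕ) (hk : 1 ≤ k) (x : ℕ) (hx : x < k ^ p) :
    Srev k p (Srev k p x) = x := by
  induction p generalizing x with
  | zero =>
    simp only [pow_zero, Nat.lt_one_iff] at hx
    simp [hx, Srev]
  | succ p ih =>
    have hkp : 0 < k ^ p := Nat.pow_pos (by omega)
    have hd : x / k ^ p < k := by
      rw [Nat.div_lt_iff_lt_mul hkp, mul_comm]
      rwa [pow_succ] at hx
    have hdm : x / k ^ p % k = x / k ^ p := Nat.mod_eq_of_lt hd
    have hs : Srev k p x < k ^ p := Srev_lt k p hk x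
    have hy : Srev k (p + 1) x = k * Srev k p x + x / k ^ p := by
      rw [Srev_rec2, hdm]
    rw [hy, Srev_rec1]
    have hk0 : 0 < k := by omega
    have hdiv : (k * Srev k p x + x / k ^ p) / k = Srev k p x := by
      rw [mul_comm, add_comm, Nat.add_mul_div_right _ _ hk0, Nat.div_eq_of_lt hd, zero_add]
    have hmod : (k * Srev k p x + x / k ^ p) % k = x / k ^ p := by
      rw [Nat.mul_add_mod, Nat.mod_eq_of_lt hd]
    rw [hdiv, hmod, ← Srev_mod k p x, ih _ (Nat.mod_lt _ hkp)]
    exact Nat.mod_add_div' x (k ^ p)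

/-- For `i < k^n - 1`, `rev_n (rev_{n-1} i) = k·i mod (k^n - 1)`; moreover, with
`j = ⌊i / k^{n-1}⌋` the leading digit, `rev_n (rev_{n-1} i) = k·i - j·(k^n - 1)`. -/
theorem revRev_eq_shuffle (k n : ℕ) (hk : 2 ≤ k) (hn : 1 ≤ n)
    (i : ℕ) (hi : i < k ^ n - 1) :
    revP k n (revP k (n - 1) i) = k * i % (k ^ n - 1) ∧
    revP k n (revP k (n - 1) i) = k * i - (i / k ^ (n - 1)) * (k ^ n - 1) := by
  obtain ⟨p, rfl⟩ : ∃ p, n = p + 1 := ⟨n - 1, by omega⟩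
  simp only [Nat.add_sub_cancel]
  have hk0 : 0 < k := by omega
  have hkp : 0 < k ^ p := Nat.pow_pos hk0
  have hK : k ^ (p + 1) = k * k ^ p := by rw [pow_succ]; ring
  have hK2 : 2 ≤ k ^ (p + 1) :=
    le_trans hk (Nat.le_self_pow (by omega) k)
  have hiK : i < k ^ (p + 1) := by omega
  set j := i / k ^ p with hj
  set r := i % k ^ p with hr
  have hjlt : j < k := by
    rw [hj, Nat.div_lt_iff_lt_mul hkp]
    omega
  have hrlt : r < k ^ p := Nat.mod_lt _ hkp
  have hir : i = j * k ^ p + r := by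
    rw [hj, hr, mul_comm]; exact (Nat.div_add_mod i (k ^ p)).symm
  set s := Srev k p r with hsdef
  have hs : s < k ^ p := Srev_lt k p (by omega) r
  -- step 1
  have step1 : revP k p i = j * k ^ p + s := by
    rw [revP_eq, hsdef, hr, Srev_mod, hj]
  -- step 2
  have hm : j * k ^ p + s < k ^ (p + 1) := by
    have h1 : (j + 1) * k ^ p ≤ k * k ^ p := Nat.mul_le_mul_right _ (by omega)
    have h2 : (j + 1) * k ^ p = j * k ^ p + k ^ p := by ring
    omega
  have hmod : (j * k ^ p + s) % k ^ p = s := by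
    rw [add_comm, Nat.add_mul_mod_self_right, Nat.mod_eq_of_lt hs]
  have hdiv : (j * k ^ p + s) / k ^ p = j := by
    rw [add_comm, Nat.add_mul_div_right _ _ hkp, Nat.div_eq_of_lt hs, zero_add]
  have step2 : revP k (p + 1) (j * k ^ p + s) = k * Srev k p s + j := by
    rw [revP_eq, Nat.div_eq_of_lt hm, zero_mul, zero_add]
    show Srev k (p + 1) _ = _
    rw [Srev_rec2, ← Srev_mod, hmod, hdiv, Nat.mod_eq_of_lt hjlt]
  have step3 : Srev k p s = r := Srev_invol k p (by omega) r hrlt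
  have total : revP k (p + 1) (revP k p i) = k * r + j := by
    rw [step1, step2, step3]
  -- arithmetic
  have e1 : k * i = j * k ^ (p + 1) + k * r := by
    rw [hir, hK]; ring
  have e2 : j * k ^ (p + 1) = j * (k ^ (p + 1) - 1) + j := by
    conv_lhs => rw [← Nat.sub_add_cancel (by omega : 1 ≤ k ^ (p + 1))]
    rw [mul_add, mul_one]
  have key : k * i = (k * r + j) + j * (k ^ (p + 1) - 1) := by omega
  have bound : k * r + j < k ^ (p + 1) - 1 := by
    rcases Nat.lt_or_ge j (k - 1) with hcase | hcase
    · -- j ≤ k - 2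
      have hr1 : r + 1 ≤ k ^ p := hrlt
      have m1 : k * (r + 1) ≤ k * k ^ p := Nat.mul_le_mul_left k hr1
      have m1' : k * r + k = k * (r + 1) := by ring
      omega
    · -- j = k - 1
      have hjeq : j = k - 1 := by omega
      have e : j * k ^ p + k ^ p = k * k ^ p := by
        rw [hjeq, Nat.sub_one_mul]
        exact Nat.sub_add_cancel (Nat.le_mul_of_pos_left _ hk0)
      have hi' : j * k ^ p + r < k * k ^ p - 1 := by omega
      have hr2 : r + 2 ≤ k ^ p := by omega
      have m2 : k * (r + 2) ≤ k * k ^ p := Nat.mul_le_mul_left k hr2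
      have m2' : k * r + 2 * k = k * (r + 2) := by ring
      omega
  constructor
  · rw [total, key, Nat.add_mul_mod_self_right, Nat.mod_eq_of_lt bound]
  · rw [total]; omega
end

section
/- Let k ≥ 2, n ≥ 1, and let i < k^n − 1. Let p be the number of trailing digits equal to k−1 in the n-digit base-k representation of i (equivalently, the position of the leftmost digit that changes when i is incremented). Then rev_n(i+1) = rev_n(i) − k^n + k^{n−p} + k^{n−p−1}. -/
/-- Helper: if the low `j` digits of `i` are all `k-1`, then `k^j ∣ i+1`. -/
lemma revN_aux_dvd (k i : ℕ) (hk : 2 ≤ k) :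
    ∀ j, (∀ l < j, i / k ^ l % k = k - 1) → k ^ j ∣ i + 1 := by
  intro j
  induction j with
  | zero => simp
  | succ j ih =>
    intro h
    obtain ⟨m, hm⟩ := ih (fun l hl => h l (Nat.lt_succ_of_lt hl))
    have hkj : 1 ≤ k ^ j := Nat.one_le_pow _ _ (by omega)
    rcases m with _ | m'
    · omega
    · have hmul : k ^ j * (m' + 1) = k ^ j * m' + k ^ j := by ring
      have hieq : i = k ^ j * m' + (k ^ j - 1) := by omega
      have hdiv : i / k ^ j = m' := by
        rw [hieq, Nat.mul_add_div (by omega), Nat.div_eq_of_lt (by omega)]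
        omega
      have hdig := h j (Nat.lt_succ_self j)
      rw [hdiv] at hdig
      have hqm := Nat.div_add_mod m' k
      rw [hdig] at hqm
      refine ⟨m' / k + 1, ?_⟩
      rw [pow_succ]
      calc i + 1 = k ^ j * (m' + 1) := by omega
        _ = k ^ j * (k * (m' / k) + (k - 1) + 1) := by rw [hqm]
        _ = k ^ j * k * (m' / k + 1) := by
            have : k * (m' / k) + (k - 1) + 1 = k * (m' / k + 1) := by
              have : k * (m' / k + 1) = k * (m' / k) + k := by ring
              omega
            rw [this]; ring

/-- Geometric sum identity over ℤ. -/
lemma revN_aux_geo (k : ℤ) (n : ℕ) :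
    ∀ p ≤ n, ∑ j ∈ Finset.range p, (k - 1) * k ^ (n - 1 - j) = k ^ n - k ^ (n - p) := by
  intro p
  induction p with
  | zero => simp
  | succ p ih =>
    intro hpn
    rw [Finset.sum_range_succ, ih (by omega)]
    have h1 : n - p = (n - 1 - p) + 1 := by omega
    have h2 : n - (p + 1) = n - 1 - p := by omega
    rw [h1, h2, pow_succ]
    ring

/-- If the `n`-digit base-`k` representation of `i` has exactly `p` trailing digits
equal to `k - 1`, then `rev_n (i+1) = rev_n i - k^n + k^{n-p} + k^{n-p-1}`
(as integers). -/
theorem revN_succ (k n : ℕ) (hk : 2 ≤ k) (hn : 1 ≤ n)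
    (i : ℕ) (hi : i < k ^ n - 1) (p : ℕ)
    (h1 : ∀ j < p, i / k ^ j % k = k - 1)
    (h2 : i / k ^ p % k ≠ k - 1) :
    (revP k n (i + 1) : ℤ) =
      (revP k n i : ℤ) - k ^ n + k ^ (n - p) + k ^ (n - p - 1) := by
  have hkn : 2 ≤ k ^ n := by
    calc 2 ≤ k := hk
      _ = k ^ 1 := (pow_one k).symm
      _ ≤ k ^ n := Nat.pow_le_pow_right (by omega) hn
  -- p < n
  have hpn : p < n := by
    by_contra h
    push_neg at h
    have hd : k ^ n ∣ i + 1 :=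
      revN_aux_dvd k i hk n (fun l hl => h1 l (lt_of_lt_of_le hl h))
    have := Nat.le_of_dvd (by omega) hd
    omega
  -- structure of i
  obtain ⟨m, hm⟩ := revN_aux_dvd k i hk p h1
  have hkp : 1 ≤ k ^ p := Nat.one_le_pow _ _ (by omega)
  rcases m with _ | m'
  · omega
  have hmul : k ^ p * (m' + 1) = k ^ p * m' + k ^ p := by ring
  have hieq : i = k ^ p * m' + (k ^ p - 1) := by omega
  have hdivp : i / k ^ p = m' := by
    rw [hieq, Nat.mul_add_div (by omega), Nat.div_eq_of_lt (by omega)]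
    omega
  have hdivp1 : (i + 1) / k ^ p = m' + 1 := by
    rw [show i + 1 = k ^ p * (m' + 1) by omega, Nat.mul_div_cancel_left _ (by omega)]
  -- digit p of i: r, with r + 1 < k
  set r := m' % k with hr
  have hrk : r < k := Nat.mod_lt _ (by omega)
  have hr2 : r + 1 < k := by
    rcases Nat.lt_or_ge (r + 1) k with h | h
    · exact h
    · exfalso; apply h2; rw [hdivp]; omega
  have hqm := Nat.div_add_mod m' k
  set q := m' / k with hq
  -- digit p of i+1
  have hmod1 : (m' + 1) % k = r + 1 := by
    rw [show m' + 1 = r + 1 + k * q by omega, Nat.add_mul_mod_self_left,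
      Nat.mod_eq_of_lt hr2]
  have hdiv1 : (m' + 1) / k = q := by
    rw [show m' + 1 = r + 1 + k * q by omega, Nat.add_mul_div_left _ _ (by omega : 0 < k),
      Nat.div_eq_of_lt hr2]
    omega
  -- low digits of i+1 are 0
  have hlow : ∀ j < p, (i + 1) / k ^ j % k = 0 := by
    intro j hj
    have hsplit : k ^ p = k ^ j * (k * k ^ (p - j - 1)) := by
      rw [← pow_succ']
      rw [← pow_add]
      congr 1
      omega
    rw [show i + 1 = k ^ p * (m' + 1) by omega, hsplit, mul_assoc,
      Nat.mul_div_cancel_left _ (Nat.one_le_pow _ _ (by omega) : 0 < k ^ j),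
      mul_assoc, Nat.mul_mod_right]
  -- high digits unchanged
  have hhigh : ∀ j, p + 1 ≤ j → (i + 1) / k ^ j = i / k ^ j := by
    intro j hj
    have hsplit : k ^ j = k ^ p * (k * k ^ (j - p - 1)) := by
      rw [← pow_succ']
      rw [← pow_add]
      congr 1
      omega
    have hdd : ∀ a : ℕ, a / k ^ j = a / k ^ p / k / k ^ (j - p - 1) := by
      intro a
      rw [Nat.div_div_eq_div_mul, Nat.div_div_eq_div_mul, hsplit]
    rw [hdd, hdd, hdivp, hdivp1, hdiv1, ← hq]
  -- top quotients vanish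
  have hi1 : i + 1 < k ^ n := by omega
  have htop1 : (i + 1) / k ^ n = 0 := Nat.div_eq_of_lt hi1
  have htop : i / k ^ n = 0 := Nat.div_eq_of_lt (by omega)
  -- split the sums
  have hsum1 : ∑ j ∈ Finset.range n, ((i + 1) / k ^ j % k) * k ^ (n - 1 - j)
      = (r + 1) * k ^ (n - 1 - p)
        + ∑ j ∈ Finset.Ico (p + 1) n, (i / k ^ j % k) * k ^ (n - 1 - j) := by
    rw [Finset.range_eq_Ico, ← Finset.sum_Ico_consecutive _ (Nat.zero_le (p + 1)) hpn,
      ← Finset.range_eq_Ico, Finset.sum_range_succ]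
    rw [Finset.sum_eq_zero (fun j hj => by
      rw [hlow j (Finset.mem_range.mp hj), zero_mul])]
    rw [hdivp1, hmod1, zero_add]
    congr 1
    refine Finset.sum_congr rfl (fun j hj => ?_)
    rw [hhigh j (Finset.mem_Ico.mp hj).1]
  have hsum2 : ∑ j ∈ Finset.range n, (i / k ^ j % k) * k ^ (n - 1 - j)
      = (∑ j ∈ Finset.range p, (k - 1) * k ^ (n - 1 - j))
        + r * k ^ (n - 1 - p)
        + ∑ j ∈ Finset.Ico (p + 1) n, (i / k ^ j % k) * k ^ (n - 1 - j) := by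
    rw [Finset.range_eq_Ico, ← Finset.sum_Ico_consecutive _ (Nat.zero_le (p + 1)) hpn,
      ← Finset.range_eq_Ico, Finset.sum_range_succ, hdivp]
    congr 2
    refine Finset.sum_congr rfl (fun j hj => ?_)
    rw [h1 j (Finset.mem_range.mp hj)]
  -- put it together over ℤ
  have hgeo := revN_aux_geo (k : ℤ) n p (le_of_lt hpn)
  unfold revP
  rw [htop, htop1]
  push_cast [hsum1, hsum2, Nat.cast_sub (by omega : 1 ≤ k)]
  rw [hgeo]
  have h3 : n - 1 - p = n - p - 1 := by omega
  have h4 : n - p = (n - p - 1) + 1 := by omega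
  rw [h3, h4, pow_succ]
  ring
end

section
/- Let m ≥ 1 and suppose gcd(r, m) = gcd(s, m) = 1. With J_r as defined (J_r(x) = g·((r·(x/g)^{-1}) mod (m/g)) where g = gcd(x,m)), we have for all x: J_r(J_s(x)) ≡ x·r·s^{-1} (mod m), where s^{-1} is an inverse of s modulo m. In particular J_r(J_r(x)) ≡ x, so J_r is an involution on {0,...,m−1}. -/
/-- `Jfun m r x = g * ((r * (x/g)⁻¹) mod (m/g))` where `g = gcd x m` and the
inverse is taken modulo `m / g`. -/
def Jfun (m r x : ℕ) : ℕ :=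
  Nat.gcd x m *
    (((r : ZMod (m / Nat.gcd x m)) * (↑(x / Nat.gcd x m) : ZMod (m / Nat.gcd x m))⁻¹).val)

section Aux

lemma Jfun_gcd (m s x : ℕ) (hm : m ≠ 0) (hs : Nat.gcd s m = 1) :
    Nat.gcd (Jfun m s x) m = Nat.gcd x m := by
  set g := Nat.gcd x m with hg
  have hgdvd : g ∣ m := Nat.gcd_dvd_right x m
  have hgm : g * (m / g) = m := Nat.mul_div_cancel' hgdvd
  have hg0 : g ≠ 0 := by
    intro h; rw [h, zero_mul] at hgm; exact hm hgm.symm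
  set m' := m / g with hm'
  have hm'0 : m' ≠ 0 := by
    intro h; rw [h, mul_zero] at hgm; exact hm hgm.symm
  haveI : NeZero m' := ⟨hm'0⟩
  set w : ZMod m' := (s : ZMod m') * ((x / g : ℕ) : ZMod m')⁻¹ with hw
  have hws : IsUnit ((s : ℕ) : ZMod m') := by
    rw [ZMod.isUnit_iff_coprime]
    exact Nat.Coprime.coprime_dvd_right (Nat.div_dvd_of_dvd hgdvd) hs
  have hxu : IsUnit ((x / g : ℕ) : ZMod m') := by
    rw [ZMod.isUnit_iff_coprime]
    exact Nat.coprime_div_gcd_div_gcd (Nat.pos_of_ne_zero hg0)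
  have hxiu : IsUnit (((x / g : ℕ) : ZMod m')⁻¹) := by
    exact IsUnit.of_mul_eq_one _ (ZMod.inv_mul_of_unit _ hxu)
  have hwu : IsUnit w := hws.mul hxiu
  have hcop : Nat.Coprime w.val m' := by
    have := ZMod.val_coe_unit_coprime hwu.unit
    simpa using this
  have : Jfun m s x = g * w.val := rfl
  rw [this, ← hgm, Nat.gcd_mul_left, hcop, mul_one]

lemma Jfun_lt (m r y : ℕ) (hm : m ≠ 0) : Jfun m r y < m := by
  have hgdvd : Nat.gcd y m ∣ m := Nat.gcd_dvd_right y m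
  have hgm : Nat.gcd y m * (m / Nat.gcd y m) = m := Nat.mul_div_cancel' hgdvd
  have hg0 : Nat.gcd y m ≠ 0 := by
    intro h; rw [h, zero_mul] at hgm; exact hm hgm.symm
  have hm'0 : m / Nat.gcd y m ≠ 0 := by
    intro h; rw [h, mul_zero] at hgm; exact hm hgm.symm
  haveI : NeZero (m / Nat.gcd y m) := ⟨hm'0⟩
  have hv := ZMod.val_lt ((r : ZMod (m / Nat.gcd y m)) *
    ((y / Nat.gcd y m : ℕ) : ZMod (m / Nat.gcd y m))⁻¹)
  calc Jfun m r y < Nat.gcd y m * (m / Nat.gcd y m) := by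
        exact mul_lt_mul_of_pos_left hv (Nat.pos_of_ne_zero hg0)
    _ = m := hgm

lemma Jfun_comp_modEq (m r s : ℕ) (hm : m ≠ 0)
    (hr : Nat.gcd r m = 1) (hs : Nat.gcd s m = 1)
    (x t : ℕ) (ht : s * t ≡ 1 [MOD m]) :
    Jfun m r (Jfun m s x) ≡ x * r * t [MOD m] := by
  set g := Nat.gcd x m with hg
  have hgdvd : g ∣ m := Nat.gcd_dvd_right x m
  have hgm : g * (m / g) = m := Nat.mul_div_cancel' hgdvd
  have hg0 : g ≠ 0 := by
    intro h; rw [h, zero_mul] at hgm; exact hm hgm.symm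
  set m' := m / g with hm'
  have hm'0 : m' ≠ 0 := by
    intro h; rw [h, mul_zero] at hgm; exact hm hgm.symm
  haveI : NeZero m' := ⟨hm'0⟩
  set w : ZMod m' := (s : ZMod m') * ((x / g : ℕ) : ZMod m')⁻¹ with hw
  have hws : IsUnit ((s : ℕ) : ZMod m') := by
    rw [ZMod.isUnit_iff_coprime]
    exact Nat.Coprime.coprime_dvd_right (Nat.div_dvd_of_dvd hgdvd) hs
  have hxu : IsUnit ((x / g : ℕ) : ZMod m') := by
    rw [ZMod.isUnit_iff_coprime]
    exact Nat.coprime_div_gcd_div_gcd (Nat.pos_of_ne_zero hg0)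
  have hxiu : IsUnit (((x / g : ℕ) : ZMod m')⁻¹) :=
    IsUnit.of_mul_eq_one _ (ZMod.inv_mul_of_unit _ hxu)
  have hwu : IsUnit w := hws.mul hxiu
  -- y = Jfun m s x
  have hy : Jfun m s x = g * w.val := rfl
  have hgy : Nat.gcd (Jfun m s x) m = g := Jfun_gcd m s x hm hs
  have hydiv : Jfun m s x / g = w.val := by
    rw [hy, Nat.mul_div_cancel_left _ (Nat.pos_of_ne_zero hg0)]
  have hJ : Jfun m r (Jfun m s x)
      = g * (((r : ZMod m') * ((w.val : ℕ) : ZMod m')⁻¹).val) := by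
    conv_lhs => rw [Jfun]
    rw [hgy, hydiv]
  -- s*t = 1 in ZMod m'
  have hst : ((s : ℕ) : ZMod m') * ((t : ℕ) : ZMod m') = 1 := by
    have h1 : s * t ≡ 1 [MOD m'] := Nat.ModEq.of_dvd (Nat.div_dvd_of_dvd hgdvd) ht
    have := (ZMod.natCast_eq_natCast_iff _ _ _).mpr h1
    push_cast at this
    exact this
  have hwval : ((w.val : ℕ) : ZMod m') = w := by
    simp [ZMod.natCast_val, ZMod.cast_id]
  have hx't : w * (((x / g : ℕ) : ZMod m') * ((t : ℕ) : ZMod m')) = 1 := by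
    have : w * (((x / g : ℕ) : ZMod m') * ((t : ℕ) : ZMod m'))
        = ((s : ℕ) : ZMod m') * ((t : ℕ) : ZMod m') *
          (((x / g : ℕ) : ZMod m')⁻¹ * ((x / g : ℕ) : ZMod m')) := by
      rw [hw]; ring
    rw [this, hst, ZMod.inv_mul_of_unit _ hxu, mul_one]
  have hwinv : w⁻¹ = ((x / g : ℕ) : ZMod m') * ((t : ℕ) : ZMod m') := by
    have h2 : w⁻¹ * w = 1 := ZMod.inv_mul_of_unit w hwu
    calc w⁻¹ = w⁻¹ * (w * (((x / g : ℕ) : ZMod m') * ((t : ℕ) : ZMod m'))) := by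
          rw [hx't, mul_one]
      _ = (w⁻¹ * w) * (((x / g : ℕ) : ZMod m') * ((t : ℕ) : ZMod m')) := by ring
      _ = _ := by rw [h2, one_mul]
  have key : (((r : ZMod m') * ((w.val : ℕ) : ZMod m')⁻¹).val)
      ≡ x / g * r * t [MOD m'] := by
    rw [← ZMod.natCast_eq_natCast_iff]
    push_cast
    rw [ZMod.natCast_val, ZMod.cast_id, hwval, hwinv]
    ring
  have hxg : g * (x / g) = x := Nat.mul_div_cancel' (Nat.gcd_dvd_left x m)
  have hrw : x * r * t = g * (x / g * r * t) := by
    conv_lhs => rw [← hxg]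
    ring
  have h2 := Nat.ModEq.mul_left' (c := g) key
  rw [hgm] at h2
  rw [hJ, hrw]
  exact h2

end Aux

/-- `J_r (J_s x) ≡ x·r·s⁻¹ (mod m)`; in particular `J_r` is an involution on
`{0, ..., m-1}`. -/
theorem Jfun_comp (m r s : ℕ) (hm : 1 ≤ m)
    (hr : Nat.gcd r m = 1) (hs : Nat.gcd s m = 1)
    (x : ℕ) (hx : x < m) (t : ℕ) (ht : s * t ≡ 1 [MOD m]) :
    Jfun m r (Jfun m s x) ≡ x * r * t [MOD m] ∧
    Jfun m r (Jfun m r x) = x := by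
  have hm0 : m ≠ 0 := by omega
  constructor
  · exact Jfun_comp_modEq m r s hm0 hr hs x t ht
  · haveI : NeZero m := ⟨hm0⟩
    set t' := ((r : ZMod m)⁻¹).val with ht'
    have hru : IsUnit ((r : ℕ) : ZMod m) := by
      rw [ZMod.isUnit_iff_coprime]; exact hr
    have hrt : r * t' ≡ 1 [MOD m] := by
      rw [← ZMod.natCast_eq_natCast_iff]
      push_cast
      rw [ht', ZMod.natCast_val, ZMod.cast_id]
      exact ZMod.mul_inv_of_unit _ hru
    have h1 := Jfun_comp_modEq m r r hm0 hr hr x t' hrt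
    have h2 : x * r * t' ≡ x [MOD m] := by
      calc x * r * t' = x * (r * t') := by ring
        _ ≡ x * 1 [MOD m] := Nat.ModEq.mul_left x hrt
        _ = x := by ring
    have h3 := h1.trans h2
    unfold Nat.ModEq at h3
    rw [Nat.mod_eq_of_lt (Jfun_lt m r (Jfun m r x) hm0), Nat.mod_eq_of_lt hx] at h3
    exact h3
end

section
/- Let N = kM with k ≥ 2, M ≥ 1, and m = kM − 1. Then gcd(k, m) = 1, and the maps J_1 and J_k (with J_r(x) = g·((r·(x/g)^{-1}) mod (m/g)), g = gcd(x,m)) are involutions on {0,...,m−1} satisfying J_k(J_1(x)) ≡ k·x (mod m) for all x. Hence the k-way perfect shuffle on N elements is the product of two explicit involutions. -/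
lemma Jfun_spec (m r x : ℕ) (hm : 0 < m) (hr : Nat.Coprime r m) (hx : x < m) :
    Nat.gcd (Jfun m r x) m = Nat.gcd x m ∧ Jfun m r x < m ∧
    ((Jfun m r x / Nat.gcd x m : ℕ) : ZMod (m / Nat.gcd x m)) *
      ((x / Nat.gcd x m : ℕ) : ZMod (m / Nat.gcd x m)) = (r : ZMod (m / Nat.gcd x m)) := by
  set g := Nat.gcd x m with hg
  have hg0 : 0 < g := Nat.gcd_pos_of_pos_right x hm
  set m' := m / g with hm'def
  have hgm : g ∣ m := Nat.gcd_dvd_right x m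
  have hmm : g * m' = m := Nat.mul_div_cancel' hgm
  have hm'0 : 0 < m' := Nat.div_pos (Nat.le_of_dvd hm hgm) hg0
  haveI : NeZero m' := ⟨hm'0.ne'⟩
  set u := x / g with hu
  have hcu : Nat.Coprime u m' := Nat.coprime_div_gcd_div_gcd hg0
  have hcr : Nat.Coprime r m' := Nat.Coprime.coprime_dvd_right (Nat.div_dvd_of_dvd hgm) hr
  have hUu : IsUnit (u : ZMod m') := (ZMod.isUnit_iff_coprime u m').2 hcu
  have hUr : IsUnit (r : ZMod m') := (ZMod.isUnit_iff_coprime r m').2 hcr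
  have hUui : IsUnit ((u : ZMod m')⁻¹) :=
    IsUnit.of_mul_eq_one _ (ZMod.inv_mul_of_unit _ hUu)
  set w : ZMod m' := (r : ZMod m') * (u : ZMod m')⁻¹ with hw
  have hUw : IsUnit w := hUr.mul hUui
  have hJ : Jfun m r x = g * w.val := rfl
  have hwcop : Nat.Coprime w.val m' := by
    have := ZMod.val_coe_unit_coprime hUw.unit
    rwa [hUw.unit_spec] at this
  have hJlt : Jfun m r x < m := by
    rw [hJ, ← hmm]
    exact mul_lt_mul_of_pos_left (ZMod.val_lt w) hg0
  have hJdiv : Jfun m r x / g = w.val := by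
    rw [hJ, Nat.mul_div_cancel_left _ hg0]
  refine ⟨?_, hJlt, ?_⟩
  · rw [hJ, ← hmm, Nat.gcd_mul_left, hwcop, mul_one]
  · rw [hJdiv, ZMod.natCast_rightInverse w, hw, mul_assoc,
      ZMod.inv_mul_of_unit _ hUu, mul_one]

lemma Jfun_invol (m r : ℕ) (hm : 0 < m) (hr : Nat.Coprime r m) :
    ∀ x < m, Jfun m r (Jfun m r x) = x := by
  intro x hx
  set g := Nat.gcd x m with hg
  have hg0 : 0 < g := Nat.gcd_pos_of_pos_right x hm
  have hgm : g ∣ m := Nat.gcd_dvd_right x m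
  have hmm : g * (m / g) = m := Nat.mul_div_cancel' hgm
  have hm'0 : 0 < m / g := Nat.div_pos (Nat.le_of_dvd hm hgm) hg0
  haveI : NeZero (m / g) := ⟨hm'0.ne'⟩
  obtain ⟨h1g, h1lt, h1eq⟩ := Jfun_spec m r x hm hr hx
  obtain ⟨h2g, h2lt, h2eq⟩ := Jfun_spec m r (Jfun m r x) hm hr h1lt
  rw [h1g] at h2g h2eq
  rw [← hg] at h1eq h2eq h2g
  -- J/g is a unit mod m/g
  have hJcop : Nat.Coprime (Jfun m r x / g) (m / g) := by
    have := Nat.coprime_div_gcd_div_gcd (m := Jfun m r x) (n := m) (by rw [h1g]; exact hg0)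
    rwa [h1g] at this
  have hUJ : IsUnit ((Jfun m r x / g : ℕ) : ZMod (m / g)) :=
    (ZMod.isUnit_iff_coprime _ _).2 hJcop
  have h1eq' : ((x / g : ℕ) : ZMod (m / g)) * ((Jfun m r x / g : ℕ) : ZMod (m / g))
      = (r : ZMod (m / g)) := by rw [mul_comm]; exact h1eq
  have hkey : ((Jfun m r (Jfun m r x) / g : ℕ) : ZMod (m / g)) = ((x / g : ℕ) : ZMod (m / g)) :=
    hUJ.mul_right_cancel (h2eq.trans h1eq'.symm)
  have hlt1 : Jfun m r (Jfun m r x) / g < m / g :=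
    (Nat.div_lt_iff_lt_mul hg0).2 (by rw [mul_comm, hmm]; exact h2lt)
  have hlt2 : x / g < m / g :=
    (Nat.div_lt_iff_lt_mul hg0).2 (by rw [mul_comm, hmm]; exact hx)
  have hnat : Jfun m r (Jfun m r x) / g = x / g := by
    have := congrArg ZMod.val hkey
    rwa [ZMod.val_cast_of_lt hlt1, ZMod.val_cast_of_lt hlt2] at this
  have hd1 : g ∣ Jfun m r (Jfun m r x) := by
    rw [← h2g]; exact Nat.gcd_dvd_left _ _
  have hd2 : g ∣ x := Nat.gcd_dvd_left x m
  calc Jfun m r (Jfun m r x) = g * (Jfun m r (Jfun m r x) / g) := (Nat.mul_div_cancel' hd1).symm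
    _ = g * (x / g) := by rw [hnat]
    _ = x := Nat.mul_div_cancel' hd2

/-- With `N = k·M` and `m = k·M - 1`, we have `gcd k m = 1`, the maps `J_1` and
`J_k` are involutions on `{0, ..., m-1}`, and `J_k (J_1 x) ≡ k·x (mod m)`:
the `k`-way perfect shuffle is the product of two explicit involutions. -/
theorem shuffle_product_involutions (k M : ℕ) (hk : 2 ≤ k) (hM : 1 ≤ M) :
    Nat.gcd k (k * M - 1) = 1 ∧
    (∀ x < k * M - 1, Jfun (k * M - 1) 1 (Jfun (k * M - 1) 1 x) = x) ∧
    (∀ x < k * M - 1, Jfun (k * M - 1) k (Jfun (k * M - 1) k x) = x) ∧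
    (∀ x < k * M - 1,
      Jfun (k * M - 1) k (Jfun (k * M - 1) 1 x) ≡ k * x [MOD k * M - 1]) := by
  set m := k * M - 1 with hmdef
  have hkM : 2 ≤ k * M := le_trans hk (Nat.le_mul_of_pos_right k hM)
  have hm : 0 < m := by omega
  have hgcdk : Nat.gcd k m = 1 := by
    have h1 : Nat.gcd k m ∣ 1 := by
      have hdm : Nat.gcd k m ∣ m := Nat.gcd_dvd_right k m
      have hdkM : Nat.gcd k m ∣ k * M := Dvd.dvd.mul_right (Nat.gcd_dvd_left k m) M
      have : k * M - m = 1 := by omega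
      exact this ▸ Nat.dvd_sub hdkM hdm
    exact Nat.dvd_one.1 h1
  have hck : Nat.Coprime k m := hgcdk
  have hc1 : Nat.Coprime 1 m := Nat.coprime_one_left m
  refine ⟨hgcdk, Jfun_invol m 1 hm hc1, Jfun_invol m k hm hck, ?_⟩
  intro x hx
  set g := Nat.gcd x m with hg
  have hg0 : 0 < g := Nat.gcd_pos_of_pos_right x hm
  have hgm : g ∣ m := Nat.gcd_dvd_right x m
  have hmm : g * (m / g) = m := Nat.mul_div_cancel' hgm
  have hm'0 : 0 < m / g := Nat.div_pos (Nat.le_of_dvd hm hgm) hg0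
  haveI : NeZero (m / g) := ⟨hm'0.ne'⟩
  obtain ⟨h1g, h1lt, h1eq⟩ := Jfun_spec m 1 x hm hc1 hx
  obtain ⟨h2g, h2lt, h2eq⟩ := Jfun_spec m k (Jfun m 1 x) hm hck h1lt
  rw [h1g] at h2g h2eq
  rw [← hg] at h1eq h2eq h2g
  -- (J2/g) = k * (x/g) in ZMod (m/g)
  have hkey : ((Jfun m k (Jfun m 1 x) / g : ℕ) : ZMod (m / g)) =
      ((k * (x / g) : ℕ) : ZMod (m / g)) := by
    push_cast
    calc ((Jfun m k (Jfun m 1 x) / g : ℕ) : ZMod (m / g))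
        = ((Jfun m k (Jfun m 1 x) / g : ℕ) : ZMod (m / g)) *
            (((Jfun m 1 x / g : ℕ) : ZMod (m / g)) * ((x / g : ℕ) : ZMod (m / g))) := by
          rw [h1eq]; push_cast; ring
      _ = (((Jfun m k (Jfun m 1 x) / g : ℕ) : ZMod (m / g)) *
            ((Jfun m 1 x / g : ℕ) : ZMod (m / g))) * ((x / g : ℕ) : ZMod (m / g)) := by ring
      _ = (k : ZMod (m / g)) * ((x / g : ℕ) : ZMod (m / g)) := by rw [h2eq]
  have hmod : Jfun m k (Jfun m 1 x) / g ≡ k * (x / g) [MOD m / g] :=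
    (ZMod.natCast_eq_natCast_iff _ _ _).1 hkey
  have hmod2 : g * (Jfun m k (Jfun m 1 x) / g) ≡ g * (k * (x / g)) [MOD g * (m / g)] :=
    Nat.ModEq.mul_left' g hmod
  have hd1 : g ∣ Jfun m k (Jfun m 1 x) := by
    rw [← h2g]; exact Nat.gcd_dvd_left _ _
  have hd2 : g ∣ x := Nat.gcd_dvd_left x m
  rwa [Nat.mul_div_cancel' hd1, hmm, mul_left_comm, Nat.mul_div_cancel' hd2] at hmod2
end

section
/- Let k ≥ 2 and m = k^n − 1 with n ≥ 1. For i < k^n with i ≢ 0 handled naturally, the identity rev_n(rev_{n-1}(i)) ≡ k·i (mod m) implies that iterating the two-phase digit-reversal shuffle n times returns every element to its original position. -/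
namespace ShuffleAux

def revS (k p i : ℕ) : ℕ := ∑ j ∈ Finset.range p, (i / k ^ j % k) * k ^ (p - 1 - j)

lemma revS_mod (k p i : ℕ) : revS k p (i % k ^ p) = revS k p i := by
  unfold revS
  refine Finset.sum_congr rfl fun j hj => ?_
  have hj' : j < p := Finset.mem_range.mp hj
  have h1 : ∀ a : ℕ, a / k ^ j % k = a % k ^ (j + 1) / k ^ j := by
    intro a
    rw [pow_succ, Nat.mod_mul_right_div_self]
  rw [h1, h1, Nat.mod_mod_of_dvd _ (pow_dvd_pow k hj')]

lemma revS_succ (k p i : ℕ) :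
    revS k (p + 1) i = (i % k) * k ^ p + revS k p (i / k) := by
  unfold revS
  rw [Finset.sum_range_succ']
  rw [add_comm]
  congr 1
  · simp
  · refine Finset.sum_congr rfl fun j hj => ?_
    have he : p + 1 - 1 - (j + 1) = p - 1 - j := by omega
    rw [he, pow_succ', ← Nat.div_div_eq_div_mul]

lemma revS_succ' (k p i : ℕ) :
    revS k (p + 1) i = k * revS k p i + i / k ^ p % k := by
  unfold revS
  rw [Finset.sum_range_succ]
  congr 1
  · rw [Finset.mul_sum]
    refine Finset.sum_congr rfl fun j hj => ?_
    have hj' : j < p := Finset.mem_range.mp hj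
    have : p + 1 - 1 - j = (p - 1 - j) + 1 := by omega
    rw [this, pow_succ]
    ring
  · simp

lemma revS_lt (k p i : ℕ) (hk : 1 ≤ k) : revS k p i < k ^ p := by
  induction p generalizing i with
  | zero => simp [revS]
  | succ p ih =>
    rw [revS_succ]
    have h1 : i % k < k := Nat.mod_lt _ hk
    have h2 := ih (i / k)
    calc (i % k) * k ^ p + revS k p (i / k) < (i % k) * k ^ p + k ^ p := by omega
      _ = (i % k + 1) * k ^ p := by ring
      _ ≤ k * k ^ p := Nat.mul_le_mul_right _ (by omega)
      _ = k ^ (p + 1) := by rw [pow_succ]; ring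

lemma revS_revS (k p : ℕ) (hk : 1 ≤ k) : ∀ i, i < k ^ p → revS k p (revS k p i) = i := by
  induction p with
  | zero =>
    intro i hi
    rw [pow_zero] at hi
    have : i = 0 := by omega
    simp [revS, this]
  | succ p ih =>
    intro i hi
    have hk0 : 0 < k ^ p := pow_pos (by omega) p
    have hiq : i / k < k ^ p := by
      rw [Nat.div_lt_iff_lt_mul (by omega)]
      calc i < k ^ (p + 1) := hi
        _ = k ^ p * k := by rw [pow_succ]
    set y := revS k p (i / k) with hy
    have hylt : y < k ^ p := revS_lt k p _ hk
    have hx : revS k (p + 1) i = (i % k) * k ^ p + y := revS_succ k p i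
    rw [hx, revS_succ']
    have hdiv : ((i % k) * k ^ p + y) / k ^ p % k = i % k := by
      rw [mul_comm, Nat.mul_add_div hk0, Nat.div_eq_of_lt hylt, add_zero,
        Nat.mod_eq_of_lt (Nat.mod_lt _ (by omega : 0 < k))]
    have hmod : ((i % k) * k ^ p + y) % k ^ p = y := by
      rw [add_comm, Nat.add_mul_mod_self_right, Nat.mod_eq_of_lt hylt]
    have hrev : revS k p ((i % k) * k ^ p + y) = revS k p y := by
      rw [← revS_mod, hmod]
    rw [hdiv, hrev, hy, ih (i / k) hiq]
    exact Nat.div_add_mod i k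

/-- The cyclic digit shift. -/
lemma shuffle_eq (k p i : ℕ) (hk : 2 ≤ k) (hi : i < k ^ (p + 1)) :
    revP k (p + 1) (revP k p i) = k * (i % k ^ p) + i / k ^ p := by
  have hk1 : 1 ≤ k := by omega
  have hk0 : 0 < k ^ p := pow_pos (by omega) p
  set q := i / k ^ p with hq
  set r := i % k ^ p with hr
  have hqk : q < k := by
    rw [hq, Nat.div_lt_iff_lt_mul hk0]
    calc i < k ^ (p + 1) := hi
      _ = k * k ^ p := by ring
  set y := revS k p r with hy
  have hylt : y < k ^ p := revS_lt k p _ hk1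
  have h1 : revP k p i = q * k ^ p + y := by
    unfold revP
    rw [hy, hr, revS_mod]
    rfl
  rw [h1]
  set w := q * k ^ p + y with hw
  have hwlt : w < k ^ (p + 1) := by
    have hb : q * k ^ p + y < q * k ^ p + k ^ p := by omega
    have hb2 : q * k ^ p + k ^ p = (q + 1) * k ^ p := by ring
    have hb3 : (q + 1) * k ^ p ≤ k * k ^ p := Nat.mul_le_mul_right _ (by omega)
    have hb4 : k * k ^ p = k ^ (p + 1) := by ring
    omega
  have hwdiv : w / k ^ (p + 1) = 0 := Nat.div_eq_of_lt hwlt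
  have h2 : revP k (p + 1) w = revS k (p + 1) w := by
    unfold revP
    rw [hwdiv, zero_mul, zero_add]
    rfl
  rw [h2, revS_succ']
  have hwp : w / k ^ p % k = q := by
    rw [hw, mul_comm, Nat.mul_add_div hk0, Nat.div_eq_of_lt hylt, add_zero,
      Nat.mod_eq_of_lt hqk]
  have hwm : w % k ^ p = y := by
    rw [hw, add_comm, Nat.add_mul_mod_self_right, Nat.mod_eq_of_lt hylt]
  have hrevw : revS k p w = r := by
    rw [← revS_mod, hwm, hy, revS_revS k p hk1 r (Nat.mod_lt _ hk0)]
  rw [hwp, hrevw]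

lemma shift_le (k p i : ℕ) (hk : 2 ≤ k) (hi : i < k ^ (p + 1)) :
    k * (i % k ^ p) + i / k ^ p ≤ k ^ (p + 1) - 1 := by
  have hk0 : 0 < k ^ p := pow_pos (by omega) p
  set q := i / k ^ p with hq
  set r := i % k ^ p with hr
  have hqk : q < k := by
    rw [hq, Nat.div_lt_iff_lt_mul hk0]
    calc i < k ^ (p + 1) := hi
      _ = k * k ^ p := by ring
  have hrk : r < k ^ p := Nat.mod_lt _ hk0
  have h1 : k * r + k ≤ k * k ^ p := by
    have := Nat.mul_le_mul_left k (show r + 1 ≤ k ^ p by omega)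
    rw [mul_add, mul_one] at this
    exact this
  have h2 : k * k ^ p = k ^ (p + 1) := by ring
  omega

lemma shift_eq_mod (k p i : ℕ) (hk : 2 ≤ k)
    (hi : i < k ^ (p + 1) - 1) :
    k * (i % k ^ p) + i / k ^ p = (k * i) % (k ^ (p + 1) - 1) := by
  have hk0 : 0 < k ^ p := pow_pos (by omega) p
  have hk1 : (1:ℕ) ≤ k ^ (p + 1) := Nat.one_le_pow _ _ (by omega)
  set m := k ^ (p + 1) - 1 with hm
  have hi' : i < k ^ (p + 1) := by omega
  set q := i / k ^ p with hq
  set r := i % k ^ p with hr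
  have hqk : q < k := by
    rw [hq, Nat.div_lt_iff_lt_mul hk0]
    calc i < k ^ (p + 1) := hi'
      _ = k * k ^ p := by ring
  have hrk : r < k ^ p := Nat.mod_lt _ hk0
  set f := k * r + q with hf
  have hfle : f ≤ m := shift_le k p i hk hi'
  -- f < m : otherwise i = m
  have hflt : f < m := by
    rcases Nat.lt_or_ge f m with h | h
    · exact h
    have hfm : f = m := by omega
    exfalso
    have hmm : m = k * (k ^ p - 1) + (k - 1) := by
      have h1 : k * (k ^ p - 1) + k = k * k ^ p := by
        have := Nat.mul_le_mul_left k (show 1 ≤ k ^ p by omega)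
        have h2 : k * (k ^ p - 1 + 1) = k * (k ^ p - 1) + k := by ring
        have h3 : k ^ p - 1 + 1 = k ^ p := by omega
        rw [h3] at h2
        omega
      have h2 : k * k ^ p = k ^ (p + 1) := by ring
      omega
    have e1 : f % k = q := by rw [hf, Nat.mul_add_mod, Nat.mod_eq_of_lt hqk]
    have e2 : f / k = r := by
      rw [hf, Nat.mul_add_div (by omega : 0 < k), Nat.div_eq_of_lt hqk, add_zero]
    have e3 : m % k = k - 1 := by
      rw [hmm, Nat.mul_add_mod, Nat.mod_eq_of_lt (by omega)]
    have e4 : m / k = k ^ p - 1 := by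
      rw [hmm, Nat.mul_add_div (by omega : 0 < k), Nat.div_eq_of_lt (by omega), add_zero]
    have hq' : q = k - 1 := by rw [← e1, hfm, e3]
    have hr' : r = k ^ p - 1 := by rw [← e2, hfm, e4]
    have hieq : k ^ p * q + r = i := Nat.div_add_mod i (k ^ p)
    have h5 : k ^ p * (k - 1) + k ^ p = k ^ p * k := by
      have h6 : k - 1 + 1 = k := by omega
      calc k ^ p * (k - 1) + k ^ p = k ^ p * ((k - 1) + 1) := by ring
        _ = k ^ p * k := by rw [h6]
    have h7 : k ^ p * k = k ^ (p + 1) := by ring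
    rw [hq', hr'] at hieq
    omega
  -- congruence
  have hM : k * k ^ p = m + 1 := by
    have : k * k ^ p = k ^ (p + 1) := by ring
    omega
  have hki : k * i = m * q + f := by
    have h1 : k ^ p * q + r = i := Nat.div_add_mod i (k ^ p)
    have h2 : k * i = (k * k ^ p) * q + k * r := by rw [← h1]; ring
    rw [hM] at h2
    have h3 : (m + 1) * q = m * q + q := by ring
    omega
  rw [hki, add_comm, Nat.add_mul_mod_self_left, Nat.mod_eq_of_lt hflt]

lemma shift_iterate (k p : ℕ) (hk : 2 ≤ k) :
    ∀ (t i : ℕ), i < k ^ (p + 1) - 1 →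
    (fun j => k * (j % k ^ p) + j / k ^ p)^[t] i = (k ^ t * i) % (k ^ (p + 1) - 1) := by
  have hk1 : (2:ℕ) ≤ k ^ (p + 1) :=
    le_trans hk (Nat.le_self_pow (by omega) k)
  set m := k ^ (p + 1) - 1 with hm
  have hm0 : 0 < m := by omega
  intro t
  induction t with
  | zero => intro i hi; simp [Nat.mod_eq_of_lt hi]
  | succ t ih =>
    intro i hi
    rw [Function.iterate_succ_apply', ih i hi]
    have hlt : (k ^ t * i) % m < m := Nat.mod_lt _ hm0
    show k * ((k ^ t * i) % m % k ^ p) + (k ^ t * i) % m / k ^ p = _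
    rw [shift_eq_mod k p _ hk hlt]
    have hcong : (k * ((k ^ t * i) % m)) % m = (k * (k ^ t * i)) % m :=
      Nat.ModEq.mul_left k (Nat.mod_modEq (k ^ t * i) m)
    rw [hcong]
    congr 1
    ring

lemma shift_fixed (k p : ℕ) (hk : 2 ≤ k) :
    k * ((k ^ (p + 1) - 1) % k ^ p) + (k ^ (p + 1) - 1) / k ^ p = k ^ (p + 1) - 1 := by
  have hk0 : 0 < k ^ p := pow_pos (by omega) p
  set m := k ^ (p + 1) - 1 with hm
  have h7 : k ^ p * k = k ^ (p + 1) := by ring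
  have h5 : k ^ p * (k - 1) + k ^ p = k ^ p * k := by
    have h6 : k - 1 + 1 = k := by omega
    calc k ^ p * (k - 1) + k ^ p = k ^ p * ((k - 1) + 1) := by ring
      _ = k ^ p * k := by rw [h6]
  have hk1 : (2:ℕ) ≤ k ^ (p + 1) := le_trans hk (Nat.le_self_pow (by omega) k)
  have hmm : m = k ^ p * (k - 1) + (k ^ p - 1) := by omega
  have e1 : m % k ^ p = k ^ p - 1 := by
    rw [hmm, Nat.mul_add_mod, Nat.mod_eq_of_lt (by omega)]
  have e2 : m / k ^ p = k - 1 := by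
    rw [hmm, Nat.mul_add_div hk0, Nat.div_eq_of_lt (by omega), add_zero]
  rw [e1, e2]
  have h1 : k * (k ^ p - 1) + k = k * k ^ p := by
    have h2 : k * (k ^ p - 1 + 1) = k * (k ^ p - 1) + k := by ring
    have h3 : k ^ p - 1 + 1 = k ^ p := by omega
    rw [h3] at h2
    omega
  have h2 : k * k ^ p = k ^ (p + 1) := by ring
  omega

end ShuffleAux

/-- Iterating the two-phase digit-reversal shuffle `Ξ = rev_n ∘ rev_{n-1}`
`n` times returns every element of `{0, ..., k^n - 1}` to its original
position. -/
theorem shuffle_iterate_id (k n : ℕ) (hk : 2 ≤ k) (hn : 1 ≤ n)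
    (i : ℕ) (hi : i < k ^ n) :
    (fun j => revP k n (revP k (n - 1) j))^[n] i = i := by
  obtain ⟨p, rfl⟩ : ∃ p, n = p + 1 := ⟨n - 1, by omega⟩
  have hps : p + 1 - 1 = p := rfl
  rw [hps]
  have hk0 : 0 < k ^ p := pow_pos (by omega) p
  have hk1 : (2:ℕ) ≤ k ^ (p + 1) := le_trans hk (Nat.le_self_pow (by omega) k)
  set m := k ^ (p + 1) - 1 with hm
  have key : ∀ t j, j < k ^ (p + 1) →
      (fun j => revP k (p + 1) (revP k p j))^[t] j =
        (fun j => k * (j % k ^ p) + j / k ^ p)^[t] j ∧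
      (fun j => k * (j % k ^ p) + j / k ^ p)^[t] j < k ^ (p + 1) := by
    intro t
    induction t with
    | zero => intro j hj; exact ⟨rfl, hj⟩
    | succ t ih =>
      intro j hj
      obtain ⟨h1, h2⟩ := ih j hj
      rw [Function.iterate_succ_apply', Function.iterate_succ_apply', h1]
      set x := (fun j => k * (j % k ^ p) + j / k ^ p)^[t] j with hx
      have hle := ShuffleAux.shift_le k p x hk h2
      constructor
      · exact ShuffleAux.shuffle_eq k p x hk h2
      · show k * (x % k ^ p) + x / k ^ p < k ^ (p + 1)
        omega
  obtain ⟨h1, h2⟩ := key (p + 1) i hi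
  rw [h1]
  have him : i ≤ m := by omega
  rcases Nat.lt_or_ge i m with hlt | hge
  · rw [ShuffleAux.shift_iterate k p hk (p + 1) i hlt]
    have hM : k ^ (p + 1) = m + 1 := by omega
    have h3 : k ^ (p + 1) * i = i + m * i := by rw [hM]; ring
    rw [h3, Nat.add_mul_mod_self_left, Nat.mod_eq_of_lt hlt]
  · have hieq : i = m := by omega
    subst hieq
    have hfix : (fun j => k * (j % k ^ p) + j / k ^ p) m = m :=
      ShuffleAux.shift_fixed k p hk
    exact Function.iterate_fixed (f := fun j => k * (j % k ^ p) + j / k ^ p) hfix (p + 1)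
end
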